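/- Let e be in class 𝒞₀ and s ∈ [0,1]. Define μ_e(z) = α_e(|z|)/|z| for z ≠ 0, where α_e is the inverse of r ↦ r(1+e(r))/2. Then there exists a restitution coefficient ẽ_s in class 𝒞₀ such that 1 + s(μ_e(z) - 1) = μ_{ẽ_s}(z) for all z ∈ ℝ³ \ {0}; explicitly, ẽ_s is determined by the inverse map α(r) = (1-s) r + s α_e(r), which satisfies r ≤ α(r) ≤ 2r, α(r)/r ≤ α'(r) ≤ 2 for r > 0 and α'(0) = 1. -/

import Mathlib

open Real Set

abbrev E3 := EuclideanSpace ℝ (Fin 3)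

theorem stmt7 (e αe : ℝ → ℝ) (s : ℝ) (hs : s ∈ Set.Icc (0 : ℝ) 1)
    (h0 : e 0 = 1)
    (hrange : ∀ r ≥ (0 : ℝ), 0 < e r ∧ e r ≤ 1)
    (hcont : ContinuousOn e (Set.Ici 0))
    (hmono : AntitoneOn e (Set.Ici 0))
    (hθ : StrictMonoOn (fun r => r * e r) (Set.Ici 0))
    (hinv : ∀ r ≥ (0 : ℝ),
      αe (r * ((1 + e r) / 2)) = r ∧ αe r * ((1 + e (αe r)) / 2) = r)
    (hαbnd : ∀ r > (0 : ℝ), r ≤ αe r ∧ αe r ≤ 2 * r)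
    (hαdiff : ∀ r > (0 : ℝ), DifferentiableAt ℝ αe r ∧
      αe r / r ≤ deriv αe r ∧ deriv αe r ≤ 2)
    (hα0 : HasDerivWithinAt αe 1 (Set.Ici 0) 0) :
    (∀ r > (0 : ℝ), r ≤ (1 - s) * r + s * αe r ∧ (1 - s) * r + s * αe r ≤ 2 * r) ∧
    (∀ r > (0 : ℝ),
      ((1 - s) * r + s * αe r) / r ≤ deriv (fun t => (1 - s) * t + s * αe t) r ∧
      deriv (fun t => (1 - s) * t + s * αe t) r ≤ 2) ∧
    HasDerivWithinAt (fun t => (1 - s) * t + s * αe t) 1 (Set.Ici 0) 0 ∧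
    ∃ es : ℝ → ℝ,
      es 0 = 1 ∧
      (∀ r ≥ (0 : ℝ), 0 < es r ∧ es r ≤ 1) ∧
      ContinuousOn es (Set.Ici 0) ∧
      AntitoneOn es (Set.Ici 0) ∧
      StrictMonoOn (fun r => r * es r) (Set.Ici 0) ∧
      (∀ r ≥ (0 : ℝ),
        ((1 - s) * r + s * αe r) * ((1 + es ((1 - s) * r + s * αe r)) / 2) = r) ∧
      (∀ z : E3, z ≠ 0 →
        1 + s * (αe ‖z‖ / ‖z‖ - 1) = ((1 - s) * ‖z‖ + s * αe ‖z‖) / ‖z‖) := by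
  obtain ⟨hs0, hs1⟩ := hs
  have hαe0 : αe 0 = 0 := by
    have h := (hinv 0 le_rfl).1
    simpa using h
  have hepos : ∀ u ≥ (0:ℝ), 0 < e u := fun u hu => (hrange u hu).1
  have hαe_nonneg : ∀ r ≥ (0:ℝ), 0 ≤ αe r := by
    intro r hr
    rcases hr.eq_or_lt with h|h
    · simp [← h, hαe0]
    · exact le_of_lt (lt_of_lt_of_le h (hαbnd r h).1)
  have hkey : ∀ r > (0:ℝ), αe r * (1 + e (αe r)) = 2 * r := by
    intro r hr
    have h := (hinv r hr.le).2
    linarith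
  have hαe_lt : ∀ r > (0:ℝ), αe r < 2 * r := by
    intro r hr
    have h1 : 0 < αe r := lt_of_lt_of_le hr (hαbnd r hr).1
    have h2 := hkey r hr
    have h3 : 0 < e (αe r) := hepos _ h1.le
    nlinarith
  have hαe_sm : StrictMonoOn αe (Ici 0) := by
    intro r1 h1 r2 h2 h12
    simp only [mem_Ici] at h1 h2
    by_contra hcon
    push_neg at hcon
    have e1 := (hinv r1 h1).2
    have e2 := (hinv r2 h2).2
    have hn1 : 0 ≤ αe r1 := hαe_nonneg r1 h1
    have hn2 : 0 ≤ αe r2 := hαe_nonneg r2 h2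
    have hle : r2 ≤ r1 := by
      rcases hcon.eq_or_lt with he|he
      · rw [← e1, ← e2, he]
      · have hh := hθ hn2 hn1 he
        simp only at hh
        nlinarith
    exact absurd h12 (not_lt.2 hle)
  set α : ℝ → ℝ := fun r => (1 - s) * r + s * αe r with hαdef
  have hαr_eq : ∀ r : ℝ, (1 - s) * r + s * αe r = α r := fun r => rfl
  have hα0' : α 0 = 0 := by simp [hαdef, hαe0]
  have hα_ge : ∀ r ≥ (0:ℝ), r ≤ α r := by
    intro r hr
    rcases hr.eq_or_lt with h|h
    · simp [← h, hα0']
    · have h1 := (hαbnd r h).1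
      simp only [hαdef]
      nlinarith
  have hα_lt : ∀ r > (0:ℝ), α r < 2 * r := by
    intro r hr
    have h1 := hαe_lt r hr
    have h2 := (hαbnd r hr).1
    simp only [hαdef]
    rcases hs0.eq_or_lt with h|h
    · rw [← h]; ring_nf; linarith
    · nlinarith
  have hα_sm : StrictMonoOn α (Ici 0) := by
    intro r1 h1 r2 h2 h12
    simp only [mem_Ici] at h1 h2
    simp only [hαdef]
    rcases hs0.eq_or_lt with h|h
    · rw [← h]; ring_nf; linarith
    · have ha := hαe_sm h1 (h1.trans h12.le) h12
      have h1s : (1 - s) * r1 ≤ (1 - s) * r2 := by nlinarith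
      nlinarith
  have hαe_cont : ContinuousOn αe (Ici 0) := by
    intro x hx
    rcases (mem_Ici.1 hx).eq_or_lt with h|h
    · rw [← h]; exact hα0.continuousWithinAt
    · exact ((hαdiff x h).1.continuousAt).continuousWithinAt
  have hα_cont : ContinuousOn α (Ici 0) := by
    apply ContinuousOn.add
    · exact continuousOn_const.mul continuousOn_id
    · exact continuousOn_const.mul hαe_cont
  set A : ℝ → ℝ := fun r => α (max r 0) + min r 0 with hAdef
  have hA_pos : ∀ r ≥ (0:ℝ), A r = α r := by
    intro r hr
    simp [hAdef, max_eq_left hr, min_eq_right hr]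
  have hA_neg : ∀ r ≤ (0:ℝ), A r = r := by
    intro r hr
    simp [hAdef, max_eq_right hr, min_eq_left hr, hα0']
  have hA_sm : StrictMono A := by
    intro r1 r2 h12
    rcases le_or_gt r2 0 with h2|h2
    · rw [hA_neg r1 (h12.le.trans h2), hA_neg r2 h2]; exact h12
    · rcases le_or_gt r1 0 with h1|h1
      · rw [hA_neg r1 h1, hA_pos r2 h2.le]
        calc r1 ≤ 0 := h1
          _ < r2 := h2
          _ ≤ α r2 := hα_ge r2 h2.le
      · rw [hA_pos r1 h1.le, hA_pos r2 h2.le]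
        exact hα_sm (mem_Ici.2 h1.le) (mem_Ici.2 (h1.le.trans h12.le)) h12
  have hA_cont : Continuous A := by
    have h1 : Continuous fun r : ℝ => α (max r 0) :=
      hα_cont.comp_continuous (continuous_id.max continuous_const)
        (fun x => mem_Ici.2 (le_max_right x 0))
    exact h1.add (continuous_id.min continuous_const)
  have hA_ge : ∀ r, r ≤ A r := by
    intro r
    rcases le_or_gt r 0 with h|h
    · rw [hA_neg r h]
    · rw [hA_pos r h.le]; exact hα_ge r h.le
  have hA_top : Filter.Tendsto A Filter.atTop Filter.atTop :=
    Filter.tendsto_atTop_mono hA_ge Filter.tendsto_id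
  have hA_bot : Filter.Tendsto A Filter.atBot Filter.atBot := by
    apply Filter.Tendsto.congr' _ Filter.tendsto_id
    filter_upwards [Filter.eventually_le_atBot 0] with r hr
    exact (hA_neg r hr).symm
  have hA_surj : Function.Surjective A := hA_cont.surjective hA_top hA_bot
  set φ := StrictMono.orderIsoOfSurjective A hA_sm hA_surj with hφdef
  have hφcoe : ∀ x, φ x = A x := fun x => by
    rw [hφdef, StrictMono.coe_orderIsoOfSurjective]
  set β : ℝ → ℝ := fun t => φ.symm t with hβdef
  have hAβ : ∀ t, A (β t) = t := by
    intro t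
    have h := φ.apply_symm_apply t
    rw [hφcoe] at h
    exact h
  have hβA : ∀ r, β (A r) = r := by
    intro r
    have h := φ.symm_apply_apply r
    rw [hφcoe] at h
    exact h
  have hβ_sm : StrictMono β := φ.symm.strictMono
  have hβ_cont : Continuous β := φ.symm.continuous
  have hβ0 : β 0 = 0 := by
    have := hβA 0
    rwa [hA_neg 0 le_rfl] at this
  have hβnonneg : ∀ t ≥ (0:ℝ), 0 ≤ β t := by
    intro t ht
    rcases ht.eq_or_lt with h|h
    · simp [← h, hβ0]
    · have := hβ_sm h
      rw [hβ0] at this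
      exact this.le
  have hβpos : ∀ t > (0:ℝ), 0 < β t := by
    intro t ht
    have := hβ_sm ht
    rwa [hβ0] at this
  have hαβ : ∀ t ≥ (0:ℝ), α (β t) = t := by
    intro t ht
    rw [← hA_pos (β t) (hβnonneg t ht), hAβ]
  have hβ_le : ∀ t ≥ (0:ℝ), β t ≤ t := by
    intro t ht
    have h1 := hα_ge (β t) (hβnonneg t ht)
    rwa [hαβ t ht] at h1
  have hβ_gt : ∀ t > (0:ℝ), t < 2 * β t := by
    intro t ht
    have h1 := hα_lt (β t) (hβpos t ht)
    rwa [hαβ t ht.le] at h1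
  set es : ℝ → ℝ := fun t => if t ≤ 0 then 1 else 2 * β t / t - 1 with hesdef
  have hes0 : es 0 = 1 := by simp [hesdef]
  have hes_val : ∀ t > (0:ℝ), es t = 2 * β t / t - 1 := by
    intro t ht
    simp [hesdef, not_le.2 ht]
  have hes_range : ∀ t ≥ (0:ℝ), 0 < es t ∧ es t ≤ 1 := by
    intro t ht
    rcases ht.eq_or_lt with h|h
    · rw [← h, hes0]; norm_num
    · rw [hes_val t h]
      have h1 := hβ_le t ht
      have h2 := hβ_gt t h
      constructor
      · have : 1 < 2 * β t / t := by rw [lt_div_iff₀ h]; linarith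
        linarith
      · have : 2 * β t / t ≤ 2 := by rw [div_le_iff₀ h]; linarith
        linarith
  -- monotonicity of r ↦ α r / r
  have hdivf : ∀ r > (0:ℝ), αe r / r = 2 / (1 + e (αe r)) := by
    intro r hr
    have hk := hkey r hr
    have hp : 0 < 1 + e (αe r) := by
      have := hepos _ (hαe_nonneg r hr.le)
      linarith
    field_simp
    linarith
  have hq_mono : ∀ r1 r2, 0 < r1 → r1 ≤ r2 → α r1 / r1 ≤ α r2 / r2 := by
    intro r1 r2 h1 h2
    have h2' : 0 < r2 := h1.trans_le h2
    have he12 : e (αe r2) ≤ e (αe r1) := by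
      rcases h2.eq_or_lt with h|h
      · rw [h]
      · exact hmono (mem_Ici.2 (hαe_nonneg r1 h1.le)) (mem_Ici.2 (hαe_nonneg r2 h2'.le))
          (hαe_sm (mem_Ici.2 h1.le) (mem_Ici.2 h2'.le) h).le
    have hp1 : 0 < 1 + e (αe r1) := by
      have := hepos _ (hαe_nonneg r1 h1.le); linarith
    have hp2 : 0 < 1 + e (αe r2) := by
      have := hepos _ (hαe_nonneg r2 h2'.le); linarith
    have hde : αe r1 / r1 ≤ αe r2 / r2 := by
      rw [hdivf r1 h1, hdivf r2 h2']
      gcongr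
    have g1 : α r1 / r1 = (1 - s) + s * (αe r1 / r1) := by
      simp only [hαdef]
      field_simp
    have g2 : α r2 / r2 = (1 - s) + s * (αe r2 / r2) := by
      simp only [hαdef]
      field_simp
    rw [g1, g2]
    nlinarith
  have hes_anti : AntitoneOn es (Ici 0) := by
    intro t1 h1 t2 h2 h12
    simp only [mem_Ici] at h1 h2
    rcases h1.eq_or_lt with h|h
    · rw [← h, hes0]
      exact (hes_range t2 h2).2
    · have ht2 : 0 < t2 := h.trans_le h12
      rw [hes_val t1 h, hes_val t2 ht2]
      have hb1 : 0 < β t1 := hβpos t1 h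
      have hb2 : 0 < β t2 := hβpos t2 ht2
      have hb12 : β t1 ≤ β t2 := hβ_sm.monotone h12
      have hmq := hq_mono (β t1) (β t2) hb1 hb12
      rw [div_le_div_iff₀ hb1 hb2] at hmq
      rw [hαβ t1 h.le, hαβ t2 ht2.le] at hmq
      have : 2 * β t2 / t2 ≤ 2 * β t1 / t1 := by
        rw [div_le_div_iff₀ ht2 h]
        nlinarith
      linarith
  have hϑ : ∀ r ≥ (0:ℝ), αe r * e (αe r) = 2 * r - αe r := by
    intro r hr
    rcases hr.eq_or_lt with h|h
    · simp [← h, hαe0]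
    · linear_combination hkey r h
  have hval : ∀ t ≥ (0:ℝ), t * es t = 2 * β t - t := by
    intro t ht
    rcases ht.eq_or_lt with h|h
    · simp [← h, hβ0]
    · rw [hes_val t h]
      field_simp
  have hF : ∀ r ≥ (0:ℝ), 2 * r - α r = (1 - s) * r + s * (αe r * e (αe r)) := by
    intro r hr
    rw [hϑ r hr]
    simp only [hαdef]
    ring
  have hes_sm : StrictMonoOn (fun t => t * es t) (Ici 0) := by
    intro t1 h1 t2 h2 h12
    simp only [mem_Ici] at h1 h2
    simp only []
    rw [hval t1 h1, hval t2 h2]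
    have hr1 : 0 ≤ β t1 := hβnonneg t1 h1
    have hr12 : β t1 < β t2 := hβ_sm h12
    have hr2 : 0 ≤ β t2 := hr1.trans hr12.le
    have k1 : 2 * β t1 - t1 = (1 - s) * β t1 + s * (αe (β t1) * e (αe (β t1))) := by
      have hk := hF (β t1) hr1
      rwa [hαβ t1 h1] at hk
    have k2 : 2 * β t2 - t2 = (1 - s) * β t2 + s * (αe (β t2) * e (αe (β t2))) := by
      have hk := hF (β t2) hr2
      rwa [hαβ t2 h2] at hk
    have hθ12 : αe (β t1) * e (αe (β t1)) < αe (β t2) * e (αe (β t2)) := by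
      have hh := hθ (mem_Ici.2 (hαe_nonneg _ hr1)) (mem_Ici.2 (hαe_nonneg _ hr2))
        (hαe_sm (mem_Ici.2 hr1) (mem_Ici.2 hr2) hr12)
      simpa using hh
    have a2 : (1 - s) * β t1 ≤ (1 - s) * β t2 := by nlinarith
    rcases hs0.eq_or_lt with h|h
    · rw [k1, k2, ← h]
      ring_nf
      linarith
    · rw [k1, k2]
      have a1 : s * (αe (β t1) * e (αe (β t1))) < s * (αe (β t2) * e (αe (β t2))) := by
        exact (mul_lt_mul_iff_right₀ h).2 hθ12
      linarith
  have hinv_es : ∀ r ≥ (0:ℝ), α r * ((1 + es (α r)) / 2) = r := by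
    intro r hr
    rcases hr.eq_or_lt with h|h
    · rw [← h, hα0']; ring
    · have hαr : 0 < α r := h.trans_le (hα_ge r hr)
      have hβα : β (α r) = r := by rw [← hA_pos r hr, hβA]
      rw [hes_val (α r) hαr, hβα]
      field_simp
      ring
  have hes_cont : ContinuousOn es (Ici 0) := by
    intro x hx
    rcases (mem_Ici.1 hx).eq_or_lt with h|h
    · -- continuity at 0
      have hslope : Filter.Tendsto (fun r => αe r / r) (nhdsWithin 0 (Ioi 0)) (nhds 1) := by
        have hsl := hasDerivWithinAt_iff_tendsto_slope.1 hα0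
        rw [Ici_sdiff_left] at hsl
        refine Filter.Tendsto.congr' ?_ hsl
        filter_upwards [self_mem_nhdsWithin] with r hr
        simp [slope_def_field, hαe0]
      have hq_tend : Filter.Tendsto (fun r => α r / r) (nhdsWithin 0 (Ioi 0)) (nhds 1) := by
        have hT : Filter.Tendsto (fun r => (1 - s) + s * (αe r / r)) (nhdsWithin 0 (Ioi 0))
            (nhds ((1 - s) + s * 1)) :=
          Filter.Tendsto.add tendsto_const_nhds (hslope.const_mul s)
        have h1 : (1 - s) + s * 1 = 1 := by ring
        rw [h1] at hT
        refine Filter.Tendsto.congr' ?_ hT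
        filter_upwards [self_mem_nhdsWithin] with r hr
        simp only [hαdef]
        have hr' : (r:ℝ) ≠ 0 := ne_of_gt hr
        field_simp
      have hβ_tend : Filter.Tendsto β (nhdsWithin 0 (Ioi 0)) (nhdsWithin 0 (Ioi 0)) := by
        rw [tendsto_nhdsWithin_iff]
        constructor
        · have h1 : Filter.Tendsto β (nhds 0) (nhds (β 0)) := hβ_cont.tendsto 0
          rw [hβ0] at h1
          exact h1.mono_left nhdsWithin_le_nhds
        · filter_upwards [self_mem_nhdsWithin] with t ht
          exact hβpos t ht
      have hfrac : Filter.Tendsto (fun t => β t / t) (nhdsWithin 0 (Ioi 0)) (nhds 1) := by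
        have comp : Filter.Tendsto (fun t => α (β t) / β t) (nhdsWithin 0 (Ioi 0)) (nhds 1) :=
          hq_tend.comp hβ_tend
        have inv1 : Filter.Tendsto (fun t => (α (β t) / β t)⁻¹) (nhdsWithin 0 (Ioi 0)) (nhds 1) := by
          have := comp.inv₀ one_ne_zero
          simpa using this
        refine Filter.Tendsto.congr' ?_ inv1
        filter_upwards [self_mem_nhdsWithin] with t ht
        rw [hαβ t (le_of_lt ht), inv_div]
      have htend : Filter.Tendsto es (nhdsWithin 0 (Ioi 0)) (nhds 1) := by
        have hT : Filter.Tendsto (fun t => 2 * (β t / t) - 1) (nhdsWithin 0 (Ioi 0))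
            (nhds (2 * 1 - 1)) :=
          Filter.Tendsto.sub (hfrac.const_mul 2) tendsto_const_nhds
        norm_num at hT
        refine Filter.Tendsto.congr' ?_ hT
        filter_upwards [self_mem_nhdsWithin] with t ht
        rw [hes_val t ht, mul_div_assoc]
      rw [← h]
      have hsplit : nhdsWithin (0:ℝ) (Ici 0) = nhdsWithin 0 {0} ⊔ nhdsWithin 0 (Ioi 0) := by
        rw [← nhdsWithin_union]
        congr 1
        rw [union_comm, Ioi_union_left]
      have : Filter.Tendsto es (nhdsWithin 0 (Ici 0)) (nhds 1) := by
        rw [hsplit, Filter.tendsto_sup]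
        constructor
        · rw [nhdsWithin_singleton]
          simpa [hes0] using tendsto_pure_nhds es 0
        · exact htend
      unfold ContinuousWithinAt
      rwa [hes0]
    · have hc : ContinuousAt (fun t => 2 * β t / t - 1) x := by
        have h1 : ContinuousAt (fun t => 2 * β t) x :=
          (hβ_cont.continuousAt).const_mul 2
        exact (h1.div continuousAt_id (ne_of_gt h)).sub continuousAt_const
      have hev : (fun t => 2 * β t / t - 1) =ᶠ[nhds x] es := by
        filter_upwards [Ioi_mem_nhds h] with t ht
        rw [hes_val t ht]
      exact (hc.congr hev).continuousWithinAt
  refine ⟨?_, ?_, ?_, es, hes0, hes_range, hes_cont, hes_anti, hes_sm, ?_, ?_⟩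
  · intro r hr
    rw [hαr_eq r]
    exact ⟨hα_ge r hr.le, (hα_lt r hr).le⟩
  · intro r hr
    obtain ⟨hd, hlow, hhigh⟩ := hαdiff r hr
    have hder : deriv (fun t => (1 - s) * t + s * αe t) r = (1 - s) + s * deriv αe r := by
      have h1 : HasDerivAt (fun t => (1 - s) * t + s * αe t) ((1 - s) * 1 + s * deriv αe r) r :=
        HasDerivAt.add ((hasDerivAt_id r).const_mul (1 - s)) (hd.hasDerivAt.const_mul s)
      rw [h1.deriv]
      ring
    constructor
    · rw [hder]
      have hxx : ((1 - s) * r + s * αe r) / r = (1 - s) + s * (αe r / r) := by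
        field_simp
      rw [hxx]
      nlinarith
    · rw [hder]
      nlinarith
  · have h3 : HasDerivWithinAt (fun t => (1 - s) * t + s * αe t) ((1 - s) * 1 + s * 1)
        (Ici 0) 0 :=
      HasDerivWithinAt.add ((hasDerivWithinAt_id 0 (Ici 0)).const_mul (1 - s))
        (hα0.const_mul s)
    have h4 : (1 - s) * 1 + s * 1 = 1 := by ring
    rwa [h4] at h3
  · intro r hr
    rw [hαr_eq r]
    exact hinv_es r hr
  · intro z hz
    have h : ‖z‖ ≠ 0 := norm_ne_zero_iff.2 hz
    field_simp
    ring
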